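/- In the BasicBlocker semantics, executing a block announced by bb with size n and seq = 0 that contains no control-flow instruction results in the exception flag E being set (E ≠ 0) when IC reaches 0, assuming IC = 0, B = 0, E = 0 held before the bb instruction. -/

import Mathlib

/-- State of the BasicBlocker machine: instruction counter `IC`, target
register `T`, branch flag `B`, exception flag `E`, and program counter `PC`. -/
structure BBState where
  IC : ℕ
  T : ℕ
  B : ℕ
  E : ℕ
  PC : ℕ

/-- Non-`bb` instructions: a control-flow instruction with its target, or a
plain (non-control-flow) instruction. -/
inductive BBInstr where
  | cf (target : ℕ)
  | plain

def BBInstr.isCF : BBInstr → Bool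
  | .cf _ => true
  | .plain => false

/-- Executing the `bb` instruction with size `n` and sequential flag `seq`
(where `nextAddr` is the address of the `(n+1)`-th following instruction):
if `IC ≠ 0` then `IC ← 0` and `E ← 1`; otherwise `IC ← n`; if `seq = 0` then
`B ← 1`; if `seq = 1` then `B ← 0` and `T ← nextAddr`. -/
def execBB (n : ℕ) (seq : Bool) (nextAddr : ℕ) (s : BBState) : BBState :=
  if s.IC ≠ 0 then { s with IC := 0, E := 1 }
  else if seq then { s with IC := n, B := 0, T := nextAddr }
  else { s with IC := n, B := 1 }

/-- Executing a non-`bb` instruction: first `IC` is decremented (if positive);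
a control-flow instruction writes its target to `T` if `B > 0` (then
decrementing `B`), and sets `E ← 1` if `B = 0`; afterwards, if `IC = 0` then
`PC ← T`, and if moreover `B > 0` then `E ← 1`. -/
def execInstr (i : BBInstr) (s : BBState) : BBState :=
  let s1 : BBState := { s with IC := s.IC - 1 }
  let s2 : BBState :=
    match i with
    | .cf t => if s1.B > 0 then { s1 with T := t, B := s1.B - 1 }
               else { s1 with E := 1 }
    | .plain => s1
  let s3 : BBState := if s2.IC = 0 then { s2 with PC := s2.T } else s2
  if s3.IC = 0 ∧ s3.B > 0 then { s3 with E := 1 } else s3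

/-- Run a list of non-`bb` instructions. -/
def runInstrs (l : List BBInstr) (s : BBState) : BBState :=
  l.foldl (fun s i => execInstr i s) s


lemma runInstrs_plain_E (l : List BBInstr) :
    ∀ s : BBState, s.IC = l.length → 0 < s.B → l ≠ [] →
    (∀ i ∈ l, i.isCF = false) → (runInstrs l s).E = 1 := by
  induction l with
  | nil => intro _ _ _ h; exact absurd rfl h
  | cons i rest ih =>
    intro s hIC hB _ hnone
    have hi : i = BBInstr.plain := by
      have := hnone i List.mem_cons_self
      cases i <;> simp_all [BBInstr.isCF]
    subst hi
    have hstep : runInstrs (BBInstr.plain :: rest) s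
        = runInstrs rest (execInstr .plain s) := rfl
    rw [hstep]
    rcases eq_or_ne rest [] with h | hrest
    · subst h
      simp only [runInstrs, List.foldl_nil]
      simp only [List.length_cons, List.length_nil] at hIC
      simp [execInstr, hIC, hB]
    · have hpos : 0 < rest.length := List.length_pos_iff.mpr hrest
      simp only [List.length_cons] at hIC
      have hx : execInstr .plain s = { s with IC := rest.length } := by
        have h1 : s.IC - 1 = rest.length := by omega
        have h2 : rest.length ≠ 0 := by omega
        simp [execInstr, h1, h2]
      rw [hx]
      exact ih _ rfl hB hrest (fun j hj => hnone j (List.mem_cons_of_mem _ hj))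

/-- Executing a block announced by `bb` with size `n > 0` and `seq = 0` that
contains no control-flow instruction results in the exception flag being set
(`E ≠ 0`) when `IC` reaches `0`, assuming `IC = 0`, `B = 0`, `E = 0` held
before the `bb` instruction. -/
theorem bb_block_no_cf_raises
    (n nextAddr : ℕ) (l : List BBInstr) (s0 : BBState)
    (hIC : s0.IC = 0) (hB : s0.B = 0) (hE : s0.E = 0)
    (hn : 0 < n) (hlen : l.length = n)
    -- no control-flow instruction in the block
    (hnone : ∀ i ∈ l, i.isCF = false) :
    (runInstrs l (execBB n false nextAddr s0)).E ≠ 0 := by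
  have hne : l ≠ [] := by rintro rfl; simp at hlen; omega
  have h := runInstrs_plain_E l (execBB n false nextAddr s0) ?_ ?_ hne hnone
  · omega
  · simp [execBB, hIC, hlen]
  · simp [execBB, hIC]
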